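/- Let β̄_X < β_Y be the upper Zippin index of φ_X and the lower Zippin index of φ_Y respectively (both φ_X, φ_Y : (0,∞)→(0,∞) increasing with finite dilation functions). Then there exists δ > 0 and c > 0 such that for all t ∈ (0,δ), φ_X(t)/φ_Y(t) ≥ c·t^{β_Y − β̄_X}; in particular φ_X(t)/φ_Y(t) → ∞ as t → 0⁺. -/

import Mathlib

open Filter Real Set
open Topology

/-- Iterating a submultiplicative dilation bound. -/
lemma zippin_iter_pow (φ : ℝ → ℝ) (s K : ℝ) (hK : 0 ≤ K) (hs : 0 < s)
    (h : ∀ t > (0:ℝ), φ (t * s) ≤ K * φ t) :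
    ∀ n : ℕ, ∀ t > (0:ℝ), φ (t * s ^ n) ≤ K ^ n * φ t := by
  intro n
  induction n with
  | zero => intro t ht; simp
  | succ n ih =>
    intro t ht
    have h1 : t * s ^ (n + 1) = (t * s ^ n) * s := by ring
    calc φ (t * s ^ (n + 1)) = φ ((t * s ^ n) * s) := by rw [h1]
      _ ≤ K * φ (t * s ^ n) := h _ (by positivity)
      _ ≤ K * (K ^ n * φ t) := mul_le_mul_of_nonneg_left (ih t ht) hK
      _ = K ^ (n + 1) * φ t := by ring

/-- A strict gap between Zippin indices `β̄_X < β_Y` gives a power-type gain: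
`φ_X(t)/φ_Y(t) ≥ c t^{β_Y − β̄_X}` near `0`, and `φ_X(t)/φ_Y(t) → ∞` as `t → 0⁺`. -/
theorem zippin_gap_gain (φX φY MX MY : ℝ → ℝ)
    (hXpos : ∀ t > (0:ℝ), 0 < φX t) (hYpos : ∀ t > (0:ℝ), 0 < φY t)
    (hXmono : MonotoneOn φX (Set.Ioi 0)) (hYmono : MonotoneOn φY (Set.Ioi 0))
    (hMX : ∀ s > (0:ℝ), IsLUB {r : ℝ | ∃ t > (0:ℝ), r = φX (t * s) / φX t} (MX s))
    (hMY : ∀ s > (0:ℝ), IsLUB {r : ℝ | ∃ t > (0:ℝ), r = φY (t * s) / φY t} (MY s))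
    (hlt : (⨅ u : Set.Ioi (1:ℝ), Real.log (MX u.1) / Real.log u.1) <
           (⨆ u : Set.Ioo (0:ℝ) 1, Real.log (MY u.1) / Real.log u.1)) :
    ∃ δ > (0:ℝ), ∃ c > (0:ℝ),
      (∀ t ∈ Set.Ioo (0:ℝ) δ,
        c * t ^ ((⨆ u : Set.Ioo (0:ℝ) 1, Real.log (MY u.1) / Real.log u.1) -
                 (⨅ u : Set.Ioi (1:ℝ), Real.log (MX u.1) / Real.log u.1)) ≤
          φX t / φY t) ∧
      Tendsto (fun t => φX t / φY t) (nhdsWithin 0 (Set.Ioi 0)) atTop := by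
  haveI : Nonempty (Set.Ioi (1:ℝ)) := ⟨⟨2, by norm_num⟩⟩
  haveI : Nonempty (Set.Ioo (0:ℝ) 1) := ⟨⟨1/2, by norm_num⟩⟩
  set bX := (⨅ u : Set.Ioi (1:ℝ), Real.log (MX u.1) / Real.log u.1) with hbX
  set bY := (⨆ u : Set.Ioo (0:ℝ) 1, Real.log (MY u.1) / Real.log u.1) with hbY
  set d : ℝ := (bY - bX) / 3 with hd
  have hdpos : 0 < d := by simp only [hd]; linarith
  set α : ℝ := bX + d with hα
  set β : ℝ := bY - d with hβ
  have hαβ : α - β = -d := by simp only [hα, hβ, hd]; ring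
  -- choose s0 > 1 with log MX s0 / log s0 < α
  obtain ⟨⟨s0, hs0mem⟩, hfs0⟩ := exists_lt_of_ciInf_lt
    (show bX < α by simp only [hα]; linarith)
  have hs0gt1 : 1 < s0 := hs0mem
  have hs0pos : 0 < s0 := lt_trans one_pos hs0gt1
  -- choose s1 ∈ (0,1) with log MY s1 / log s1 > β
  obtain ⟨⟨s1, hs1mem⟩, hfs1⟩ := exists_lt_of_lt_ciSup
    (show β < bY by simp only [hβ]; linarith)
  have hs1pos : 0 < s1 := hs1mem.1
  have hs1lt1 : s1 < 1 := hs1mem.2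
  -- basic facts on MX s0 and MY s1
  have hMX0 : 0 < MX s0 := by
    have h1 : φX (1 * s0) / φX 1 ≤ MX s0 :=
      (hMX s0 hs0pos).1 ⟨1, one_pos, rfl⟩
    have : 0 < φX (1 * s0) / φX 1 :=
      div_pos (hXpos _ (by positivity)) (hXpos 1 one_pos)
    linarith
  have hMY0 : 0 < MY s1 := by
    have h1 : φY (1 * s1) / φY 1 ≤ MY s1 :=
      (hMY s1 hs1pos).1 ⟨1, one_pos, rfl⟩
    have : 0 < φY (1 * s1) / φY 1 :=
      div_pos (hYpos _ (by simpa using hs1pos)) (hYpos 1 one_pos)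
    linarith
  have hMXle : MX s0 ≤ s0 ^ α := by
    have hlog : Real.log (MX s0) < α * Real.log s0 := by
      have h1 : 0 < Real.log s0 := Real.log_pos hs0gt1
      calc Real.log (MX s0) = Real.log (MX s0) / Real.log s0 * Real.log s0 := by
            field_simp
        _ < α * Real.log s0 := by
            exact mul_lt_mul_of_pos_right hfs0 h1
    exact le_of_lt ((Real.lt_rpow_iff_log_lt hMX0 hs0pos).2 hlog)
  have hMYle : MY s1 ≤ s1 ^ β := by
    have hls1 : Real.log s1 < 0 := Real.log_neg hs1pos hs1lt1
    have hlog : Real.log (MY s1) < β * Real.log s1 := by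
      have := (lt_div_iff_of_neg hls1).1 hfs1
      linarith [this]
    exact le_of_lt ((Real.lt_rpow_iff_log_lt hMY0 hs1pos).2 hlog)
  -- dilation bounds
  have hboundX : ∀ u > (0:ℝ), φX (u * s0) ≤ MX s0 * φX u := fun u hu =>
    (div_le_iff₀ (hXpos u hu)).1 ((hMX s0 hs0pos).1 ⟨u, hu, rfl⟩)
  have hboundY : ∀ u > (0:ℝ), φY (u * s1) ≤ MY s1 * φY u := fun u hu =>
    (div_le_iff₀ (hYpos u hu)).1 ((hMY s1 hs1pos).1 ⟨u, hu, rfl⟩)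
  -- key lower bound for φX
  set CX : ℝ := φX 1 / max (s0 ^ α) 1 with hCX
  have hCXpos : 0 < CX := by
    apply div_pos (hXpos 1 one_pos)
    exact lt_max_of_lt_right one_pos
  have keyX : ∀ t ∈ Set.Ioc (0:ℝ) 1, CX * t ^ α ≤ φX t := by
    rintro t ⟨ht0, ht1⟩
    have hex : ∃ n : ℕ, 1 ≤ t * s0 ^ n := by
      obtain ⟨n, hn⟩ := pow_unbounded_of_one_lt (1/t) hs0gt1
      exact ⟨n, by rw [mul_comm]; exact le_of_lt ((div_lt_iff₀ ht0).1 hn)⟩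
    set n := Nat.find hex with hn
    have hn1 : 1 ≤ t * s0 ^ n := Nat.find_spec hex
    have hn2 : t * s0 ^ n < s0 := by
      rcases Nat.eq_zero_or_pos n with h0 | hpos
      · rw [h0]; simpa using lt_of_le_of_lt ht1 hs0gt1
      · have hm : ¬ (1 ≤ t * s0 ^ (n - 1)) := Nat.find_min hex (Nat.sub_lt hpos one_pos)
        push_neg at hm
        have : t * s0 ^ (n - 1) * s0 < 1 * s0 := by
          apply mul_lt_mul_of_pos_right hm hs0pos
        have heq : t * s0 ^ (n - 1) * s0 = t * s0 ^ n := by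
          rw [mul_assoc, ← pow_succ, Nat.sub_add_cancel hpos]
        linarith [this, heq ▸ this]
    have hiter := zippin_iter_pow φX s0 (MX s0) hMX0.le hs0pos hboundX n t ht0
    set P : ℝ := s0 ^ n with hP
    have hPpos : 0 < P := by positivity
    have hKn : (MX s0) ^ n ≤ P ^ α := by
      calc (MX s0) ^ n ≤ (s0 ^ α) ^ n := pow_le_pow_left₀ hMX0.le hMXle n
        _ = P ^ α := by
            rw [hP, ← Real.rpow_natCast (s0 ^ α) n, ← Real.rpow_natCast s0 n,
              ← Real.rpow_mul hs0pos.le, ← Real.rpow_mul hs0pos.le, mul_comm]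
    have h1 : φX 1 ≤ φX (t * P) :=
      hXmono (mem_Ioi.2 one_pos) (mem_Ioi.2 (by positivity)) hn1
    have h2 : φX 1 ≤ P ^ α * φX t := by
      calc φX 1 ≤ φX (t * P) := h1
        _ ≤ (MX s0) ^ n * φX t := hiter
        _ ≤ P ^ α * φX t := mul_le_mul_of_nonneg_right hKn (hXpos t ht0).le
    -- P ^ α ≤ t ^ (-α) * max (s0 ^ α) 1
    have hPα : P ^ α ≤ t ^ (-α) * max (s0 ^ α) 1 := by
      rcases le_or_gt 0 α with hα0 | hα0
      · have hPle : P ≤ s0 / t := by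
          rw [le_div_iff₀ ht0, mul_comm]; exact hn2.le
        calc P ^ α ≤ (s0 / t) ^ α := Real.rpow_le_rpow hPpos.le hPle hα0
          _ = s0 ^ α * t ^ (-α) := by
              rw [Real.div_rpow hs0pos.le ht0.le, Real.rpow_neg ht0.le, div_eq_mul_inv]
          _ ≤ t ^ (-α) * max (s0 ^ α) 1 := by
              rw [mul_comm]
              exact mul_le_mul_of_nonneg_left (le_max_left _ _)
                (Real.rpow_nonneg ht0.le _)
      · have hPge : 1 / t ≤ P := by
          rw [div_le_iff₀ ht0, mul_comm]; exact hn1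
        calc P ^ α ≤ (1 / t) ^ α :=
              Real.rpow_le_rpow_of_nonpos (by positivity) hPge hα0.le
          _ = t ^ (-α) := by
              rw [one_div, ← Real.rpow_neg_one t, ← Real.rpow_mul ht0.le]
              ring_nf
          _ ≤ t ^ (-α) * max (s0 ^ α) 1 := by
              nth_rewrite 1 [← mul_one (t ^ (-α))]
              exact mul_le_mul_of_nonneg_left (le_max_right _ _)
                (Real.rpow_nonneg ht0.le _)
    have h3 : φX 1 ≤ (t ^ (-α) * max (s0 ^ α) 1) * φX t :=
      le_trans h2 (mul_le_mul_of_nonneg_right hPα (hXpos t ht0).le)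
    have htα : (0:ℝ) < t ^ α := Real.rpow_pos_of_pos ht0 _
    have hmax : (0:ℝ) < max (s0 ^ α) 1 := lt_max_of_lt_right one_pos
    have h4 : φX 1 * t ^ α ≤ φX t * max (s0 ^ α) 1 := by
      calc φX 1 * t ^ α ≤ ((t ^ (-α) * max (s0 ^ α) 1) * φX t) * t ^ α :=
            mul_le_mul_of_nonneg_right h3 htα.le
        _ = (t ^ (-α) * t ^ α) * (φX t * max (s0 ^ α) 1) := by ring
        _ = 1 * (φX t * max (s0 ^ α) 1) := by rw [← Real.rpow_add ht0]; norm_num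
        _ = φX t * max (s0 ^ α) 1 := one_mul _
    rw [hCX, div_mul_eq_mul_div, div_le_iff₀ hmax]
    exact h4
  -- key upper bound for φY
  set CY : ℝ := φY 1 * max (s1 ^ (-β)) 1 with hCY
  have hCYpos : 0 < CY := mul_pos (hYpos 1 one_pos) (lt_max_of_lt_right one_pos)
  have keyY : ∀ t ∈ Set.Ioc (0:ℝ) 1, φY t ≤ CY * t ^ β := by
    rintro t ⟨ht0, ht1⟩
    have hex : ∃ m : ℕ, s1 ^ m < t := exists_pow_lt_of_lt_one ht0 hs1lt1
    set m := Nat.find hex with hmdef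
    have hm : s1 ^ m < t := Nat.find_spec hex
    have hmpos : 0 < m := by
      rcases Nat.eq_zero_or_pos m with h0 | h
      · exfalso; rw [h0] at hm; simp at hm; linarith
      · exact h
    set n := m - 1 with hndef
    have hup : t ≤ s1 ^ n := by
      have := Nat.find_min hex (show n < m from Nat.sub_lt hmpos one_pos)
      push_neg at this; exact this
    have hlow : s1 ^ n * s1 < t := by
      rw [← pow_succ, hndef, Nat.sub_add_cancel hmpos]; exact hm
    set S : ℝ := s1 ^ n with hSdef
    have hS : 0 < S := by positivity
    set r : ℝ := t / S with hrdef
    have hr0 : 0 < r := div_pos ht0 hS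
    have hr1 : r ≤ 1 := (div_le_one hS).2 hup
    have hteq : t = r * S := by rw [hrdef, div_mul_cancel₀ t hS.ne']
    have hiter := zippin_iter_pow φY s1 (MY s1) hMY0.le hs1pos hboundY n r hr0
    have hKn : (MY s1) ^ n ≤ S ^ β := by
      calc (MY s1) ^ n ≤ (s1 ^ β) ^ n := pow_le_pow_left₀ hMY0.le hMYle n
        _ = S ^ β := by
            rw [hSdef, ← Real.rpow_natCast (s1 ^ β) n, ← Real.rpow_natCast s1 n,
              ← Real.rpow_mul hs1pos.le, ← Real.rpow_mul hs1pos.le, mul_comm]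
    have hφr : φY r ≤ φY 1 :=
      hYmono (mem_Ioi.2 hr0) (mem_Ioi.2 one_pos) hr1
    have hSβ : S ^ β ≤ t ^ β * max (s1 ^ (-β)) 1 := by
      rcases le_or_gt 0 β with hβ0 | hβ0
      · have hSle : S ≤ t / s1 := by
          rw [le_div_iff₀ hs1pos]; exact hlow.le
        calc S ^ β ≤ (t / s1) ^ β := Real.rpow_le_rpow hS.le hSle hβ0
          _ = t ^ β * s1 ^ (-β) := by
              rw [Real.div_rpow ht0.le hs1pos.le, Real.rpow_neg hs1pos.le, div_eq_mul_inv]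
          _ ≤ t ^ β * max (s1 ^ (-β)) 1 :=
              mul_le_mul_of_nonneg_left (le_max_left _ _) (Real.rpow_nonneg ht0.le _)
      · calc S ^ β ≤ t ^ β := Real.rpow_le_rpow_of_nonpos ht0 hup hβ0.le
          _ = t ^ β * 1 := (mul_one _).symm
          _ ≤ t ^ β * max (s1 ^ (-β)) 1 :=
              mul_le_mul_of_nonneg_left (le_max_right _ _) (Real.rpow_nonneg ht0.le _)
    calc φY t = φY (r * S) := by rw [← hteq]
      _ ≤ (MY s1) ^ n * φY r := hiter
      _ ≤ S ^ β * φY 1 :=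
          mul_le_mul hKn hφr (hYpos r hr0).le (Real.rpow_nonneg hS.le _)
      _ ≤ (t ^ β * max (s1 ^ (-β)) 1) * φY 1 :=
          mul_le_mul_of_nonneg_right hSβ (hYpos 1 one_pos).le
      _ = CY * t ^ β := by rw [hCY]; ring
  -- combine
  set c0 : ℝ := CX / CY with hc0
  have hc0pos : 0 < c0 := div_pos hCXpos hCYpos
  have main : ∀ t ∈ Set.Ioo (0:ℝ) 1, c0 * t ^ (-d) ≤ φX t / φY t := by
    rintro t ⟨ht0, ht1⟩
    have h1 := keyX t ⟨ht0, ht1.le⟩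
    have h2 := keyY t ⟨ht0, ht1.le⟩
    have hdd : CX * t ^ α / (CY * t ^ β) ≤ φX t / φY t :=
      div_le_div₀ (hXpos t ht0).le h1 (hYpos t ht0) h2
    have heq : CX * t ^ α / (CY * t ^ β) = c0 * t ^ (-d) := by
      have htβ : (0:ℝ) < t ^ β := Real.rpow_pos_of_pos ht0 _
      calc CX * t ^ α / (CY * t ^ β) = (CX / CY) * (t ^ α / t ^ β) := by rw [div_mul_div_comm]
        _ = c0 * t ^ (α - β) := by rw [← Real.rpow_sub ht0, hc0]
        _ = c0 * t ^ (-d) := by rw [hαβ]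
    linarith [heq ▸ hdd]
  refine ⟨1, one_pos, c0, hc0pos, ?_, ?_⟩
  · rintro t ⟨ht0, ht1⟩
    have h1 : t ^ (bY - bX) ≤ 1 :=
      Real.rpow_le_one ht0.le ht1.le (by simp only [hd] at hdpos; linarith)
    have h2 : (1:ℝ) ≤ t ^ (-d) :=
      Real.one_le_rpow_of_pos_of_le_one_of_nonpos ht0 ht1.le (by linarith)
    calc c0 * t ^ (bY - bX) ≤ c0 * 1 := mul_le_mul_of_nonneg_left h1 hc0pos.le
      _ ≤ c0 * t ^ (-d) := mul_le_mul_of_nonneg_left h2 hc0pos.le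
      _ ≤ φX t / φY t := main t ⟨ht0, ht1⟩
  · have htend : Tendsto (fun t : ℝ => c0 * t ^ (-d)) (𝓝[>] (0:ℝ)) atTop := by
      apply Tendsto.const_mul_atTop hc0pos
      have h1 : Tendsto (fun t : ℝ => (t⁻¹) ^ d) (𝓝[>] (0:ℝ)) atTop :=
        (tendsto_rpow_atTop hdpos).comp tendsto_inv_nhdsGT_zero
      apply h1.congr'
      filter_upwards [self_mem_nhdsWithin] with t ht
      rw [Real.inv_rpow (le_of_lt ht), ← Real.rpow_neg (le_of_lt ht)]
    apply tendsto_atTop_mono' (𝓝[>] (0:ℝ)) ?_ htend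
    filter_upwards [Ioo_mem_nhdsGT
      (show (0:ℝ) < 1 from one_pos)] with t ht
    exact main t ht
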